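/- arXiv:2508.19216 — 3 statements merged into one kernel-verified Lean document; each statement's English description precedes it below -/
import Mathlib

section
/- Let ρ : ℝ → ℝ be continuous with ρ' ∈ L²(ℝ), 1-ρ² ∈ L²(ℝ), ρ ≥ 0, and ρ(x) → 1 as x → -∞. Then for every x ∈ ℝ, (1-ρ(x))² ≤ 2·‖1-ρ²‖_{L²}·‖ρ'‖_{L²}. -/
open MeasureTheory

/-- If `ρ` is continuous with derivative `ρ' ∈ L²(ℝ)`, `1-ρ² ∈ L²(ℝ)`, `ρ ≥ 0` and
`ρ(x) → 1` as `x → -∞`, then `(1-ρ(x))² ≤ 2‖1-ρ²‖_{L²}‖ρ'‖_{L²}` for every `x`. -/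
theorem one_sub_rho_sq_bound (ρ ρ' : ℝ → ℝ)
    (hcont : Continuous ρ)
    (hderiv : ∀ x, HasDerivAt ρ (ρ' x) x)
    (hρ'L2 : MemLp ρ' 2 volume)
    (hL2 : MemLp (fun x => 1 - (ρ x)^2) 2 volume)
    (hnn : ∀ x, 0 ≤ ρ x)
    (hlim : Filter.Tendsto ρ Filter.atBot (nhds 1)) :
    ∀ x : ℝ, (1 - ρ x)^2 ≤
      2 * Real.sqrt (∫ y : ℝ, (1 - (ρ y)^2)^2) * Real.sqrt (∫ y : ℝ, (ρ' y)^2) := by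
  intro x
  have hρ'meas : AEStronglyMeasurable ρ' volume := hρ'L2.1
  set f : ℝ → ℝ := fun y => |1 - (ρ y)^2| with hf_def
  set g : ℝ → ℝ := fun y => |ρ' y| with hg_def
  have hf2 : MemLp f 2 volume := by
    simpa [hf_def, Real.norm_eq_abs] using hL2.norm
  have hg2 : MemLp g 2 volume := by
    simpa [hg_def, Real.norm_eq_abs] using hρ'L2.norm
  set C := 2 * Real.sqrt (∫ y : ℝ, (1 - (ρ y)^2)^2) * Real.sqrt (∫ y : ℝ, (ρ' y)^2) with hC
  -- L² elements
  set F : Lp ℝ 2 volume := hf2.toLp f with hF_def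
  set G : Lp ℝ 2 volume := hg2.toLp g with hG_def
  have hFcoe : F =ᵐ[volume] f := hf2.coeFn_toLp
  have hGcoe : G =ᵐ[volume] g := hg2.coeFn_toLp
  -- integrability of f*g
  have hint : Integrable (fun y => f y * g y) volume := by
    have h := L2.integrable_inner (𝕜 := ℝ) F G
    refine h.congr ?_
    filter_upwards [hFcoe, hGcoe] with y hy1 hy2
    simp [RCLike.inner_apply, hy1, hy2, mul_comm]
  -- Cauchy–Schwarz
  have hCS : ∫ y : ℝ, f y * g y ≤
      Real.sqrt (∫ y : ℝ, (1 - (ρ y)^2)^2) * Real.sqrt (∫ y : ℝ, (ρ' y)^2) := by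
    have h1 : (inner ℝ F G : ℝ) = ∫ y : ℝ, f y * g y := by
      rw [L2.inner_def]
      refine integral_congr_ae ?_
      filter_upwards [hFcoe, hGcoe] with y hy1 hy2
      simp [RCLike.inner_apply, hy1, hy2, mul_comm]
    have h2 : ‖F‖ = Real.sqrt (∫ y : ℝ, (1 - (ρ y)^2)^2) := by
      have hsq : ‖F‖ ^ 2 = ∫ y : ℝ, (1 - (ρ y)^2)^2 := by
        rw [← real_inner_self_eq_norm_sq, L2.inner_def]
        refine integral_congr_ae ?_
        filter_upwards [hFcoe] with y hy
        simp [RCLike.inner_apply, hy, hf_def, ← sq_abs (1 - (ρ y)^2), sq]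
      rw [← hsq, Real.sqrt_sq (norm_nonneg F)]
    have h3 : ‖G‖ = Real.sqrt (∫ y : ℝ, (ρ' y)^2) := by
      have hsq : ‖G‖ ^ 2 = ∫ y : ℝ, (ρ' y)^2 := by
        rw [← real_inner_self_eq_norm_sq, L2.inner_def]
        refine integral_congr_ae ?_
        filter_upwards [hGcoe] with y hy
        simp [RCLike.inner_apply, hy, hg_def, ← sq_abs (ρ' y), sq]
      rw [← hsq, Real.sqrt_sq (norm_nonneg G)]
    calc ∫ y : ℝ, f y * g y = (inner ℝ F G : ℝ) := h1.symm
      _ ≤ ‖F‖ * ‖G‖ := real_inner_le_norm F G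
      _ = _ := by rw [h2, h3]
  -- pointwise bound |1-ρ| ≤ |1-ρ²|
  have habs : ∀ y, |1 - ρ y| ≤ f y := by
    intro y
    have h1 : (1 : ℝ) - (ρ y)^2 = (1 - ρ y) * (1 + ρ y) := by ring
    have h2 : f y = |1 - ρ y| * (1 + ρ y) := by
      show |1 - (ρ y)^2| = |1 - ρ y| * (1 + ρ y)
      rw [h1, abs_mul, abs_of_nonneg (show (0:ℝ) ≤ 1 + ρ y by linarith [hnn y])]
    rw [h2]
    nlinarith [abs_nonneg (1 - ρ y), hnn y]
  -- the derivative of (1-ρ)²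
  set D : ℝ → ℝ := fun y => -(2 * (1 - ρ y) * ρ' y) with hD_def
  have hDderiv : ∀ y, HasDerivAt (fun z => (1 - ρ z)^2) (D y) y := by
    intro y
    simpa using ((hderiv y).const_sub 1).fun_pow 2
  have hρ'm : Measurable ρ' := by
    have : ρ' = deriv ρ := funext fun z => ((hderiv z).deriv).symm
    rw [this]; exact measurable_deriv ρ
  have hDbound : ∀ y, ‖D y‖ ≤ 2 * (f y * g y) := by
    intro y
    have hfy : f y = |1 - (ρ y)^2| := rfl
    have hgy : g y = |ρ' y| := rfl
    have hDy : ‖D y‖ = 2 * |1 - ρ y| * |ρ' y| := by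
      rw [hD_def]
      simp only [Real.norm_eq_abs, abs_neg, abs_mul, abs_two]
    rw [hDy, hfy, hgy]
    nlinarith [mul_le_mul_of_nonneg_right (habs y) (abs_nonneg (ρ' y)), abs_nonneg (ρ' y)]
  have hDmeas : AEStronglyMeasurable D volume := by
    apply Measurable.aestronglyMeasurable
    exact ((measurable_const.mul ((continuous_const.sub hcont).measurable)).mul hρ'm).neg
  have hDint : Integrable D volume := by
    refine Integrable.mono' (hint.const_mul 2) hDmeas ?_
    exact Filter.Eventually.of_forall hDbound
  have h2fgnn : 0 ≤ᵐ[volume] fun y => 2 * (f y * g y) := by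
    refine Filter.Eventually.of_forall fun y => ?_
    positivity
  -- main bound for a ≤ x
  have hkey : ∀ a : ℝ, a ≤ x → (1 - ρ x)^2 ≤ (1 - ρ a)^2 + C := by
    intro a hax
    have hftc : (1 - ρ x)^2 - (1 - ρ a)^2 = ∫ y in a..x, D y :=
      (intervalIntegral.integral_eq_sub_of_hasDerivAt (fun y _ => hDderiv y)
        hDint.intervalIntegrable).symm
    have hbd : ∫ y in a..x, D y ≤ C := by
      have h1 : ∫ y in a..x, D y ≤ ∫ y in a..x, 2 * (f y * g y) := by
        refine intervalIntegral.integral_mono_on hax hDint.intervalIntegrable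
          ((hint.const_mul 2).intervalIntegrable) fun y _ => ?_
        calc D y ≤ ‖D y‖ := le_abs_self _
          _ ≤ 2 * (f y * g y) := hDbound y
      have h2 : ∫ y in a..x, 2 * (f y * g y) ≤ ∫ y : ℝ, 2 * (f y * g y) := by
        rw [intervalIntegral.integral_of_le hax]
        exact setIntegral_le_integral (hint.const_mul 2) h2fgnn
      have h3 : ∫ y : ℝ, 2 * (f y * g y) ≤ C := by
        rw [integral_const_mul, hC]
        rw [mul_assoc]
        linarith [hCS]
      linarith
    linarith [hftc ▸ hbd]
  -- take the limit a → -∞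
  have hlim0 : Filter.Tendsto (fun a => (1 - ρ a)^2 + C) Filter.atBot (nhds (0 + C)) := by
    have h1 : Filter.Tendsto (fun a => 1 - ρ a) Filter.atBot (nhds 0) := by
      have := hlim.const_sub 1
      simpa using this
    have h2 : Filter.Tendsto (fun a => (1 - ρ a)^2) Filter.atBot (nhds 0) := by
      have := h1.pow 2
      simpa using this
    exact h2.add tendsto_const_nhds
  have : (1 - ρ x)^2 ≤ 0 + C := by
    refine ge_of_tendsto hlim0 ?_
    filter_upwards [Filter.eventually_le_atBot x] with a ha
    exact hkey a ha
  linarith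
end

section
/- Suppose ρ, v : ℝ → ℝ are C² and solve the ODE system -ρ'' + c²(1-ρ⁴)/(4ρ³) = (1-ρ²-αv²)ρ and -v'' = (λ - αρ² - βv²)v on ℝ, with ρ > 0, and suppose (ρ')² + (v')² - (1 - c²/(2ρ²))·(1-ρ²)²/2 - ((β/2)v² + αρ² - λ)v² has derivative zero. Then for any x₀ with v(x₀) > 0 and (ρ'(x₀))² + (v'(x₀))² ≥ 0, if αρ(x₀)² < λ - (β/2)v(x₀)² and ρ(x₀)² < c²/2, a contradiction arises; i.e., ρ(x)² ≥ min{ λ/α - (β/(2α))v(x)², c²/2 } for all x where the Hamiltonian identity (ρ')²+(v')² = (1 - c²/(2ρ²))(1-ρ²)²/2 + ((β/2)v² + αρ² - λ)v² holds and v(x) > 0. -/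
/-- For solutions of the traveling-wave ODE system satisfying the Hamiltonian identity,
at every point where `v > 0` one has `ρ² ≥ min{λ/α - (β/(2α))v², c²/2}`. -/
theorem rho_sq_lower_bound (α β c lam : ℝ) (hα : 0 < α) (hβ : 0 ≤ β)
    (ρ v ρ' v' ρ'' v'' : ℝ → ℝ)
    (hρ1 : ∀ x, HasDerivAt ρ (ρ' x) x) (hρ2 : ∀ x, HasDerivAt ρ' (ρ'' x) x)
    (hv1 : ∀ x, HasDerivAt v (v' x) x) (hv2 : ∀ x, HasDerivAt v' (v'' x) x)
    (hρpos : ∀ x, 0 < ρ x)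
    (hODE1 : ∀ x, -ρ'' x + c^2 * (1 - (ρ x)^4) / (4 * (ρ x)^3)
      = (1 - (ρ x)^2 - α * (v x)^2) * ρ x)
    (hODE2 : ∀ x, -v'' x = (lam - α * (ρ x)^2 - β * (v x)^2) * v x)
    (hHam : ∀ x, (ρ' x)^2 + (v' x)^2
      = (1 - c^2 / (2 * (ρ x)^2)) * (1 - (ρ x)^2)^2 / 2
        + ((β/2) * (v x)^2 + α * (ρ x)^2 - lam) * (v x)^2) :
    ∀ x : ℝ, 0 < v x →
      min (lam/α - (β/(2*α)) * (v x)^2) (c^2/2) ≤ (ρ x)^2 := by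
  intro x hv
  by_contra h
  push_neg at h
  rw [lt_min_iff] at h
  obtain ⟨h1, h2⟩ := h
  have hρx := hρpos x
  have hρ2 : (0:ℝ) < (ρ x)^2 := by positivity
  -- αρ² < lam - (β/2)v²
  have hA : α * (ρ x)^2 < lam - (β/2) * (v x)^2 := by
    have e1 : α * (lam/α) = lam := by field_simp
    have e2 : α * (β/(2*α)) = β/2 := by field_simp
    nlinarith [mul_lt_mul_of_pos_left h1 hα]
  have hB : 1 - c^2 / (2 * (ρ x)^2) < 0 := by
    rw [sub_neg]
    rw [lt_div_iff₀ (by positivity)]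
    nlinarith
  have hHx := hHam x
  have hsq : 0 ≤ (ρ' x)^2 + (v' x)^2 := by positivity
  nlinarith [sq_nonneg (1 - (ρ x)^2), sq_nonneg (v x), mul_pos hv hv]
end

section
/- Let ρ, v be a solution of the traveling-wave ODE system with v ∈ H¹(ℝ), v ≥ 0, v not identically zero, ρ measurable, α > 0, β ≥ 0, and suppose αρ(x)² ≥ λ - (β/2)v(x)² for all x ∈ ℝ. Then testing the equation -v'' = (λ - αρ² - βv²)v with v gives 0 = ∫((v')² + (βv² + αρ² - λ)v²)dx ≥ ∫((v')² + (β/2)v⁴)dx ≥ 0, hence v ≡ 0 — contradiction. Therefore there exists y ∈ ℝ with λ/α - (β/(2α))v(y)² > c²/2 whenever ρ < 1 everywhere and the minimum bound ρ² ≥ min{λ/α - (β/(2α))v², c²/2} holds; consequently 2λ > αc². -/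
open MeasureTheory

/-- If `v` is a nonnegative, not identically zero `H¹` solution of the bright component
equation, `0 < ρ < 1`, the lower bound `ρ² ≥ min{λ/α - (β/(2α))v², c²/2}` holds, and
`0 = ∫((v')² + (βv² + αρ² - λ)v²)` (testing the equation with `v`), then there exists
`y` with `λ/α - (β/(2α))v(y)² > c²/2`, and consequently `2λ > αc²`. -/
theorem multiplier_lower_bound (α β c lam : ℝ) (hα : 0 < α) (hβ : 0 ≤ β)
    (ρ v v' : ℝ → ℝ)
    (hvcont : Continuous v)
    (hvderiv : ∀ x, HasDerivAt v (v' x) x)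
    (hv2 : MemLp v 2 volume)
    (hvnn : ∀ x, 0 ≤ v x) (hvne : ∃ x, v x ≠ 0)
    (hρ : ∀ x, 0 < ρ x ∧ ρ x < 1)
    (hmin : ∀ x, min (lam/α - (β/(2*α)) * (v x)^2) (c^2/2) ≤ (ρ x)^2)
    (hintg : Integrable (fun x => (v' x)^2 + (β * (v x)^2 + α * (ρ x)^2 - lam) * (v x)^2))
    (htest : 0 = ∫ x : ℝ, ((v' x)^2 + (β * (v x)^2 + α * (ρ x)^2 - lam) * (v x)^2)) :
    (∃ y : ℝ, c^2/2 < lam/α - (β/(2*α)) * (v y)^2) ∧ α * c^2 < 2 * lam := by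
  have hy : ∃ y : ℝ, c^2/2 < lam/α - (β/(2*α)) * (v y)^2 := by
    by_contra h
    push_neg at h
    -- pointwise lower bound: α ρ² ≥ λ - (β/2) v²
    have hpt : ∀ x, lam - (β/2) * (v x)^2 ≤ α * (ρ x)^2 := by
      intro x
      have h1 := hmin x
      rw [min_eq_left (h x)] at h1
      have h2 := mul_le_mul_of_nonneg_left h1 hα.le
      have e1 : α * (lam/α) = lam := by field_simp
      have e2 : α * (β/(2*α)) = β/2 := by field_simp
      nlinarith [h2, e1, e2, sq_nonneg (v x), mul_le_mul_of_nonneg_right e2.le (sq_nonneg (v x)), mul_le_mul_of_nonneg_right e2.ge (sq_nonneg (v x))]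
    -- nonnegativity of the integrand
    have hnn : ∀ x, 0 ≤ (v' x)^2 + (β * (v x)^2 + α * (ρ x)^2 - lam) * (v x)^2 := by
      intro x
      nlinarith [sq_nonneg (v' x), sq_nonneg (v x), hpt x, sq_nonneg ((v x)^2),
        mul_nonneg (mul_nonneg hβ (sq_nonneg (v x))) (sq_nonneg (v x))]
    -- integrand is a.e. zero
    have hae : (fun x => (v' x)^2 + (β * (v x)^2 + α * (ρ x)^2 - lam) * (v x)^2)
        =ᶠ[ae volume] 0 :=
      (integral_eq_zero_iff_of_nonneg hnn hintg).mp htest.symm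
    -- hence v' = 0 a.e.
    have hv'0 : v' =ᶠ[ae volume] 0 := by
      filter_upwards [hae] with x hx
      have hx' : (v' x)^2 + (β * (v x)^2 + α * (ρ x)^2 - lam) * (v x)^2 = 0 := hx
      have hrest : 0 ≤ (β * (v x)^2 + α * (ρ x)^2 - lam) * (v x)^2 := by
        nlinarith [hpt x, sq_nonneg (v x), sq_nonneg ((v x)^2),
          mul_nonneg (mul_nonneg hβ (sq_nonneg (v x))) (sq_nonneg (v x))]
      have : (v' x)^2 = 0 := by nlinarith [sq_nonneg (v' x)]
      exact pow_eq_zero_iff (by norm_num) |>.mp this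
    -- v is constant
    have hconst : ∀ x, v x = v 0 := by
      intro x
      have hint : IntervalIntegrable v' volume 0 x := by
        constructor <;>
          exact (integrable_zero _ _ _).congr (ae_restrict_of_ae hv'0.symm)
      have hftc := intervalIntegral.integral_eq_sub_of_hasDerivAt
        (fun t _ => hvderiv t) hint
      have hz : (∫ t in (0:ℝ)..x, v' t) = ∫ t in (0:ℝ)..x, (0:ℝ) := by
        apply intervalIntegral.integral_congr_ae
        filter_upwards [hv'0] with t ht _
        exact ht
      rw [hz, intervalIntegral.integral_zero] at hftc
      linarith [hftc]
    -- contradiction with v ∈ L² and v ≢ 0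
    obtain ⟨x₀, hx₀⟩ := hvne
    have hv0ne : v 0 ≠ 0 := by rw [← hconst x₀]; exact hx₀
    have hsq : Integrable (fun x => (v x)^2) volume := hv2.integrable_sq
    have hcst : Integrable (fun _ : ℝ => (v 0)^2) volume := by
      apply hsq.congr
      filter_upwards with x
      rw [hconst x]
    rcases integrable_const_iff.mp hcst with h0 | hfin
    · exact hv0ne (pow_eq_zero_iff (by norm_num) |>.mp h0)
    · haveI := hfin; simpa using (measure_lt_top (volume : Measure ℝ) Set.univ).ne
  obtain ⟨y, hy'⟩ := hy
  refine ⟨⟨y, hy'⟩, ?_⟩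
  have h2 : 0 ≤ (β/(2*α)) * (v y)^2 := by positivity
  have h3 : c^2/2 < lam/α := by linarith
  rw [div_lt_div_iff₀ (by norm_num) hα] at h3
  linarith
end
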